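/- arXiv:1308.6175 — 4 statements merged into one kernel-verified Lean document; each statement's English description precedes it below -/
import Mathlib

section
/- Let C_0 ⊆ C_1 ⊆ ... ⊆ C_{a-1} ⊆ C_a = (ZMod 2)^n be a family of nested binary linear codes. Then the code formula set Γ_CF is an additive subgroup of ℤ^n (i.e., a lattice) if and only if the chain is closed under Schur product, i.e., for every i ∈ {0, ..., a-1} and every c, d ∈ C_i, the componentwise product c ∗ d belongs to C_{i+1}. -/
noncomputable section

/-- The natural embedding of `(ZMod 2)^n` into `ℤ^n`, applying coordinatewise the map
sending `0` to `0` and `1` to `1`. -/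
def psi {n : ℕ} (x : Fin n → ZMod 2) : Fin n → ℤ := fun k => ((x k).val : ℤ)

/-- The code formula set `Γ_CF = ψ(C₀) + 2ψ(C₁) + ... + 2^{a-1}ψ(C_{a-1}) + 2^a ℤ^n`
associated to a chain of binary codes `C₀ ⊆ C₁ ⊆ ... ⊆ C_a = (ZMod 2)^n`. -/
def GammaCF {n : ℕ} (a : ℕ) (C : ℕ → Submodule (ZMod 2) (Fin n → ZMod 2)) :
    Set (Fin n → ℤ) :=
  { x | ∃ (c : ℕ → Fin n → ZMod 2) (l : Fin n → ℤ),
      (∀ i < a, c i ∈ C i) ∧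
      x = (∑ i ∈ Finset.range a, (2 ^ i : ℤ) • psi (c i)) + (2 ^ a : ℤ) • l }

lemma psi_zero {n : ℕ} : psi (0 : Fin n → ZMod 2) = 0 := by
  funext k; simp [psi]

lemma psi_three {n : ℕ} (x y z : Fin n → ZMod 2) :
    psi x + psi y + psi z = psi (x + y + z) + (2:ℤ) • psi (x*y + x*z + y*z) := by
  funext k
  have h : ∀ u v w : ZMod 2, ((u.val:ℤ) + v.val + w.val
      = ((u+v+w).val:ℤ) + 2 * ((u*v + u*w + v*w).val:ℤ)) := by decide
  simpa [psi, Pi.add_apply, Pi.mul_apply, smul_eq_mul] using h (x k) (y k) (z k)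

lemma psi_two {n : ℕ} (x y : Fin n → ZMod 2) :
    psi x + psi y = psi (x + y) + (2:ℤ) • psi (x * y) := by
  have := psi_three x y 0
  simpa [psi_zero] using this

lemma int_digit_unique : ∀ (a : ℕ) (b b' : ℕ → ℤ) (l l' : ℤ),
    (∀ j, b j = 0 ∨ b j = 1) → (∀ j, b' j = 0 ∨ b' j = 1) →
    (∑ j ∈ Finset.range a, 2^j * b j) + 2^a * l
      = (∑ j ∈ Finset.range a, 2^j * b' j) + 2^a * l' →
    ∀ j < a, b j = b' j := by
  intro a
  induction a with
  | zero => intro _ _ _ _ _ _ _ j hj; omega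
  | succ a ih =>
    intro b b' l l' hb hb' heq j hj
    rw [Finset.sum_range_succ', Finset.sum_range_succ' (fun j => 2^j * b' j)] at heq
    have e1 : ∀ (c : ℕ → ℤ), (∑ i ∈ Finset.range a, 2^(i+1) * c (i+1))
        = 2 * ∑ i ∈ Finset.range a, 2^i * c (i+1) := by
      intro c
      rw [Finset.mul_sum]
      refine Finset.sum_congr rfl fun i _ => by ring
    rw [e1 b, e1 b'] at heq
    set S := ∑ i ∈ Finset.range a, 2^i * b (i+1) with hS
    set S' := ∑ i ∈ Finset.range a, 2^i * b' (i+1) with hS'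
    have heq2 : b 0 + 2*(S + 2^a*l) = b' 0 + 2*(S' + 2^a*l') := by linear_combination heq
    have h0 : b 0 = b' 0 := by
      rcases hb 0 with h | h <;> rcases hb' 0 with h' | h' <;> omega
    have h2 : S + 2^a * l = S' + 2^a * l' := by omega
    have := ih (fun i => b (i+1)) (fun i => b' (i+1)) l l'
      (fun i => hb (i+1)) (fun i => hb' (i+1)) h2
    rcases j with _ | j
    · exact h0
    · exact this j (by omega)

lemma digit_unique {n a : ℕ} (g h : ℕ → Fin n → ZMod 2) (l l' : Fin n → ℤ)
    (heq : (∑ j ∈ Finset.range a, (2^j:ℤ) • psi (g j)) + (2^a:ℤ) • l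
         = (∑ j ∈ Finset.range a, (2^j:ℤ) • psi (h j)) + (2^a:ℤ) • l') :
    ∀ j < a, g j = h j := by
  intro j hj
  funext k
  have hk := congrFun heq k
  simp only [Pi.add_apply, Finset.sum_apply, Pi.smul_apply, smul_eq_mul, psi] at hk
  have hbit : ∀ u : ZMod 2, ((u.val : ℤ) = 0 ∨ (u.val : ℤ) = 1) := by decide
  have hval := int_digit_unique a (fun j => ((g j k).val : ℤ)) (fun j => ((h j k).val : ℤ))
    (l k) (l' k) (fun j => hbit _) (fun j => hbit _) hk j hj
  have hinj : ∀ u v : ZMod 2, (u.val : ℤ) = (v.val : ℤ) → u = v := by decide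
  exact hinj _ _ hval

lemma single_mem {n a : ℕ} (C : ℕ → Submodule (ZMod 2) (Fin n → ZMod 2))
    {j : ℕ} (hj : j < a) {e : Fin n → ZMod 2} (he : e ∈ C j) :
    (2^j:ℤ) • psi e ∈ GammaCF a C := by
  refine ⟨fun i => if i = j then e else 0, 0, ?_, ?_⟩
  · intro i hi
    by_cases hij : i = j
    · subst hij; simpa using he
    · simpa [hij] using (C i).zero_mem
  · have : ∀ i ∈ Finset.range a, (2^i:ℤ) • psi (if i = j then e else 0)
        = if i = j then (2^i:ℤ) • psi e else 0 := by
      intro i _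
      split <;> simp [psi_zero]
    rw [Finset.sum_congr rfl this, Finset.sum_ite_eq' (Finset.range a) j
      (fun i => (2^i:ℤ) • psi e), if_pos (Finset.mem_range.mpr hj)]
    simp

lemma add_aux {n a : ℕ} (C : ℕ → Submodule (ZMod 2) (Fin n → ZMod 2))
    (hschur : ∀ i < a, ∀ c ∈ C i, ∀ d ∈ C i, c * d ∈ C (i+1)) :
    ∀ t, t ≤ a → ∀ (c d : ℕ → Fin n → ZMod 2) (e : Fin n → ZMod 2) (l : Fin n → ℤ),
      (∀ i, a - t ≤ i → i < a → c i ∈ C i) →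
      (∀ i, a - t ≤ i → i < a → d i ∈ C i) →
      e ∈ C (a - t) →
      ∃ (f : ℕ → Fin n → ZMod 2) (l' : Fin n → ℤ),
        (∀ i, a - t ≤ i → i < a → f i ∈ C i) ∧
        (∑ i ∈ Finset.Ico (a - t) a, (2^i:ℤ) • (psi (c i) + psi (d i)))
          + (2^(a-t):ℤ) • psi e + (2^a:ℤ) • l
        = (∑ i ∈ Finset.Ico (a - t) a, (2^i:ℤ) • psi (f i)) + (2^a:ℤ) • l' := by
  intro t
  induction t with
  | zero =>
    intro _ c d e l _ _ _
    refine ⟨0, psi e + l, fun i h1 h2 => by omega, ?_⟩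
    simp only [Nat.sub_zero, Finset.Ico_self, Finset.sum_empty, zero_add]
    rw [smul_add]
  | succ t ih =>
    intro ht c d e l hc hd he
    have hta : t ≤ a := by omega
    set j := a - (t+1) with hjdef
    have hja : j < a := by omega
    have hjt : a - t = j + 1 := by omega
    -- the carry
    set s := c j + d j + e with hs
    set carry := c j * d j + c j * e + d j * e with hcarry
    have hcj : c j ∈ C j := hc j le_rfl hja
    have hdj : d j ∈ C j := hd j le_rfl hja
    have hej : e ∈ C j := he
    have hcarrymem : carry ∈ C (j+1) :=
      add_mem (add_mem (hschur j hja _ hcj _ hdj) (hschur j hja _ hcj _ hej))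
        (hschur j hja _ hdj _ hej)
    obtain ⟨f, l'', hf, hEq⟩ := ih hta c d carry l
      (fun i h1 h2 => hc i (by omega) h2) (fun i h1 h2 => hd i (by omega) h2)
      (hjt ▸ hcarrymem)
    rw [hjt] at hEq hf
    refine ⟨fun i => if i = j then s else f i, l'', ?_, ?_⟩
    · intro i h1 h2
      by_cases hij : i = j
      · subst hij
        simpa using add_mem (add_mem hcj hdj) hej
      · simpa [hij] using hf i (by omega) h2
    · rw [Finset.sum_eq_sum_Ico_succ_bot hja, Finset.sum_eq_sum_Ico_succ_bot hja
        (f := fun i => (2^i:ℤ) • psi (if i = j then s else f i))]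
      have hrest : (∑ i ∈ Finset.Ico (j+1) a,
            (2^i:ℤ) • psi (if i = j then s else f i))
          = ∑ i ∈ Finset.Ico (j+1) a, (2^i:ℤ) • psi (f i) := by
        refine Finset.sum_congr rfl fun i hi => ?_
        have : i ≠ j := by
          have := (Finset.mem_Ico.mp hi).1; omega
        rw [if_neg this]
      rw [hrest, if_pos rfl]
      funext k
      have h3 := congrFun (psi_three (c j) (d j) e) k
      have hE := congrFun hEq k
      simp only [Pi.add_apply, Finset.sum_apply, Pi.smul_apply, smul_eq_mul, psi,
        Pi.mul_apply] at h3 hE ⊢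
      linear_combination (2^j:ℤ) * h3 + hE

lemma smul_top_mem {n a : ℕ} (C : ℕ → Submodule (ZMod 2) (Fin n → ZMod 2))
    (l : Fin n → ℤ) : (2^a:ℤ) • l ∈ GammaCF a C := by
  refine ⟨0, l, fun i _ => (C i).zero_mem, ?_⟩
  simp [psi_zero]

lemma zero_mem_gamma {n a : ℕ} (C : ℕ → Submodule (ZMod 2) (Fin n → ZMod 2)) :
    (0 : Fin n → ℤ) ∈ GammaCF a C := by
  simpa using smul_top_mem C 0

lemma gamma_add_mem {n a : ℕ} (C : ℕ → Submodule (ZMod 2) (Fin n → ZMod 2))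
    (hschur : ∀ i < a, ∀ c ∈ C i, ∀ d ∈ C i, c * d ∈ C (i+1))
    {x y : Fin n → ℤ} (hx : x ∈ GammaCF a C) (hy : y ∈ GammaCF a C) :
    x + y ∈ GammaCF a C := by
  obtain ⟨c, l, hc, rfl⟩ := hx
  obtain ⟨d, m, hd, rfl⟩ := hy
  obtain ⟨f, l', hf, hEq⟩ := add_aux C hschur a le_rfl c d 0 (l + m)
    (fun i h1 h2 => hc i h2) (fun i h1 h2 => hd i h2) ((C (a-a)).zero_mem)
  rw [Nat.sub_self, ← Finset.range_eq_Ico] at hEq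
  simp only [smul_add, Finset.sum_add_distrib] at hEq
  refine ⟨f, l', fun i hi => hf i (by omega) hi, ?_⟩
  funext k
  have hE := congrFun hEq k
  simp only [Pi.add_apply, Finset.sum_apply, Pi.smul_apply, smul_eq_mul, psi,
    Pi.zero_apply, ZMod.val_zero, Int.natCast_zero] at hE ⊢
  linear_combination hE

lemma gamma_neg_aux {n a : ℕ} (C : ℕ → Submodule (ZMod 2) (Fin n → ZMod 2))
    (hschur : ∀ i < a, ∀ c ∈ C i, ∀ d ∈ C i, c * d ∈ C (i+1))
    (hmono : ∀ i < a, C i ≤ C (i + 1)) :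
    ∀ t, t ≤ a → ∀ e ∈ C (a - t), -((2^(a-t):ℤ) • psi e) ∈ GammaCF a C := by
  intro t
  induction t with
  | zero =>
    intro _ e _
    rw [Nat.sub_zero, ← smul_neg]
    exact smul_top_mem C _
  | succ t ih =>
    intro ht e he
    have hja : a - (t+1) < a := by omega
    have hjt : a - t = a - (t+1) + 1 := by omega
    set j := a - (t+1) with hj
    have he' : e ∈ C (a - t) := by
      rw [hjt]; exact hmono j hja he
    have key : -((2^j:ℤ) • psi e) = (2^j:ℤ) • psi e + -((2^(j+1):ℤ) • psi e) := by
      funext k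
      simp only [Pi.neg_apply, Pi.add_apply, Pi.smul_apply, smul_eq_mul]
      ring
    rw [key]
    exact gamma_add_mem C hschur (single_mem C hja he) (hjt ▸ ih (by omega) e he')

lemma gamma_neg_mem {n a : ℕ} (C : ℕ → Submodule (ZMod 2) (Fin n → ZMod 2))
    (hschur : ∀ i < a, ∀ c ∈ C i, ∀ d ∈ C i, c * d ∈ C (i+1))
    (hmono : ∀ i < a, C i ≤ C (i + 1))
    {x : Fin n → ℤ} (hx : x ∈ GammaCF a C) : -x ∈ GammaCF a C := by
  obtain ⟨c, l, hc, rfl⟩ := hx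
  rw [neg_add, ← Finset.sum_neg_distrib, ← smul_neg]
  refine gamma_add_mem C hschur ?_ (smul_top_mem C _)
  refine Finset.sum_induction _ (· ∈ GammaCF a C)
    (fun _ _ hu hv => gamma_add_mem C hschur hu hv) (zero_mem_gamma C) ?_
  intro i hi
  have hia : i < a := Finset.mem_range.mp hi
  have h1 : a - (a - i) = i := by omega
  have hmem : c i ∈ C (a - (a - i)) := by rw [h1]; exact hc i hia
  have := gamma_neg_aux C hschur hmono (a - i) (by omega) (c i) hmem
  rwa [h1] at this

/-- The code formula set `Γ_CF` is an additive subgroup of `ℤ^n`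
(i.e., a lattice) if and only if the chain of codes is closed under Schur product:
for every `i < a` and `c, d ∈ C_i`, the componentwise product `c * d ∈ C_{i+1}`. -/
theorem gammaCF_lattice_iff_schur {n a : ℕ}
    (C : ℕ → Submodule (ZMod 2) (Fin n → ZMod 2))
    (hmono : ∀ i < a, C i ≤ C (i + 1)) (htop : C a = ⊤) :
    (∃ G : AddSubgroup (Fin n → ℤ), (G : Set (Fin n → ℤ)) = GammaCF a C)
      ↔ (∀ i < a, ∀ c ∈ C i, ∀ d ∈ C i, c * d ∈ C (i + 1)) := by
  constructor
  · rintro ⟨G, hG⟩ i hi c hc d hd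
    by_cases hia : i + 1 = a
    · rw [hia, htop]; trivial
    have hi1 : i + 1 < a := by omega
    -- x + y ∈ Γ
    have hx : (2^i:ℤ) • psi c ∈ G := by rw [← SetLike.mem_coe, hG]; exact single_mem C hi hc
    have hy : (2^i:ℤ) • psi d ∈ G := by rw [← SetLike.mem_coe, hG]; exact single_mem C hi hd
    have hxy : (2^i:ℤ) • psi c + (2^i:ℤ) • psi d ∈ GammaCF a C := by
      rw [← hG, SetLike.mem_coe]; exact G.add_mem hx hy
    obtain ⟨f, l, hf, hEq⟩ := hxy
    -- express LHS with explicit digits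
    set g : ℕ → Fin n → ZMod 2 :=
      fun j => if j = i then c + d else if j = i + 1 then c * d else 0 with hgdef
    have hsum : (∑ j ∈ Finset.range a, (2^j:ℤ) • psi (g j)) + (2^a:ℤ) • (0 : Fin n → ℤ)
        = (2^i:ℤ) • psi c + (2^i:ℤ) • psi d := by
      have hterm : ∀ j ∈ Finset.range a, (2^j:ℤ) • psi (g j)
          = (if j = i then (2^j:ℤ) • psi (c + d) else 0)
            + (if j = i + 1 then (2^j:ℤ) • psi (c * d) else 0) := by
        intro j _
        simp only [hgdef]
        by_cases h1 : j = i
        · have h2 : ¬ (j = i + 1) := by omega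
          simp [h1, h2]
        · by_cases h2 : j = i + 1
          · simp [h1, h2]
          · simp [h1, h2, psi_zero]
      rw [Finset.sum_congr rfl hterm, Finset.sum_add_distrib,
        Finset.sum_ite_eq' (Finset.range a) i (fun j => (2^j:ℤ) • psi (c + d)),
        Finset.sum_ite_eq' (Finset.range a) (i+1) (fun j => (2^j:ℤ) • psi (c * d)),
        if_pos (Finset.mem_range.mpr hi), if_pos (Finset.mem_range.mpr hi1)]
      have h2 := psi_two c d
      funext k
      have hk := congrFun h2 k
      simp only [Pi.add_apply, Pi.smul_apply, smul_eq_mul, Pi.zero_apply, mul_zero,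
        add_zero] at hk ⊢
      linear_combination (-(2^i:ℤ)) * hk
    have := digit_unique g f 0 l (hsum.trans hEq) (i+1) hi1
    have hg : g (i+1) = c * d := by
      simp only [hgdef]
      have : ¬ (i + 1 = i) := by omega
      simp [this]
    rw [← hg, this]
    exact hf (i+1) hi1
  · intro hschur
    exact ⟨{ carrier := GammaCF a C,
             add_mem' := fun hx hy => gamma_add_mem C hschur hx hy,
             zero_mem' := zero_mem_gamma C,
             neg_mem' := fun hx => gamma_neg_mem C hschur hmono hx }, rfl⟩
end
end

section
/- Let C_0 ⊆ C_1 ⊆ ... ⊆ C_{a-1} ⊆ C_a = (ZMod 2)^n be a family of nested binary linear codes, and define C := { c_0 + c_1·u + ... + c_{a-1}·u^{a-1} | c_i ∈ C_i for each i } ⊆ (Fin n → 𝒰_a), where the c_i are viewed in 𝒰_a^n coefficientwise. Then C is a 𝒰_a-submodule of (Fin n → 𝒰_a), and Φ(C) + 2^a ℤ^n = Γ_CF; that is, { Φ(c) + 2^a l | c ∈ C, l ∈ ℤ^n } = { Σ_{i=0}^{a-1} 2^i ψ(c_i) + 2^a l | c_i ∈ C_i, l ∈ ℤ^n }. -/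
noncomputable section

set_option synthInstance.maxHeartbeats 400000
set_option maxHeartbeats 1000000

/-- The quotient ring `𝒰_a = 𝔽₂[u]/u^a`. -/
abbrev Ua (a : ℕ) : Type :=
  Polynomial (ZMod 2) ⧸ Ideal.span {(Polynomial.X : Polynomial (ZMod 2)) ^ a}

/-- The image `u` of the variable `X` in `𝒰_a`. -/
noncomputable def uU (a : ℕ) : Ua a := Ideal.Quotient.mk _ Polynomial.X

/-- The canonical representative (of degree `< a`) of an element of `𝒰_a`. -/
noncomputable def uaRep {a : ℕ} (x : Ua a) : Polynomial (ZMod 2) :=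
  Function.surjInv
    (Ideal.Quotient.mk_surjective
      (I := Ideal.span {(Polynomial.X : Polynomial (ZMod 2)) ^ a})) x
    %ₘ (Polynomial.X ^ a)

/-- The coefficient `b_j` of `u^j` in `x = Σ_{j<a} b_j u^j ∈ 𝒰_a`. -/
noncomputable def uaCoeff {a : ℕ} (x : Ua a) (j : ℕ) : ZMod 2 := (uaRep x).coeff j

/-- The map `Φ : 𝒰_a → ℤ` sending `Σ_{j<a} b_j u^j` to `Σ_{j<a} ψ(b_j) 2^j`. -/
noncomputable def PhiU {a : ℕ} (x : Ua a) : ℤ :=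
  ∑ j ∈ Finset.range a, ((uaCoeff x j).val : ℤ) * 2 ^ j

/-- `Φ` extended componentwise to a map `(Fin n → 𝒰_a) → (Fin n → ℤ)`. -/
noncomputable def PhiV {n a : ℕ} (c : Fin n → Ua a) : Fin n → ℤ := fun k => PhiU (c k)

/-- The Construction A' set `Γ_{A'} = Φ(C) + 2^a ℤ^n` of a code `C ⊆ (Fin n → 𝒰_a)`. -/
def GammaA' {n a : ℕ} (C : Set (Fin n → Ua a)) : Set (Fin n → ℤ) :=
  { x | ∃ c ∈ C, ∃ l : Fin n → ℤ, x = PhiV c + (2 ^ a : ℤ) • l }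

/-- The code `C = C₀ + u C₁ + ... + u^{a-1} C_{a-1}` over `𝒰_a` associated to a chain
of binary codes: all vectors `Σ_{i<a} c_i u^i` with `c_i ∈ C_i`. -/
noncomputable def CodeSet {n : ℕ} (a : ℕ) (C : ℕ → Submodule (ZMod 2) (Fin n → ZMod 2)) :
    Set (Fin n → Ua a) :=
  { x | ∃ c : ℕ → Fin n → ZMod 2,
      (∀ i < a, c i ∈ C i) ∧
      x = fun k => Ideal.Quotient.mk _
        (∑ i ∈ Finset.range a, Polynomial.C (c i k) * Polynomial.X ^ i) }

/-! ### Auxiliary lemmas -/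

lemma uaRep_mk (a : ℕ) (p : Polynomial (ZMod 2)) :
    uaRep (Ideal.Quotient.mk (Ideal.span {(Polynomial.X : Polynomial (ZMod 2)) ^ a}) p)
      = p %ₘ (Polynomial.X ^ a) := by
  unfold uaRep
  set q := Function.surjInv
    (Ideal.Quotient.mk_surjective
      (I := Ideal.span {(Polynomial.X : Polynomial (ZMod 2)) ^ a}))
    (Ideal.Quotient.mk _ p) with hqdef
  have hq : Ideal.Quotient.mk (Ideal.span {(Polynomial.X : Polynomial (ZMod 2)) ^ a}) q
      = Ideal.Quotient.mk _ p := Function.surjInv_eq _ _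
  have hd : (Polynomial.X : Polynomial (ZMod 2)) ^ a ∣ (q - p) := by
    rw [← Ideal.mem_span_singleton]
    exact Ideal.Quotient.eq.mp hq
  have hqe : q = p + (q - p) := by ring
  rw [hqe, Polynomial.add_modByMonic,
    (Polynomial.modByMonic_eq_zero_iff_dvd (Polynomial.monic_X_pow a)).mpr hd, add_zero]

lemma coeff_sum_CX (a : ℕ) (b : ℕ → ZMod 2) (j : ℕ) (hj : j < a) :
    (∑ i ∈ Finset.range a, Polynomial.C (b i) * Polynomial.X ^ i).coeff j = b j := by
  rw [Polynomial.finset_sum_coeff]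
  simp only [Polynomial.coeff_C_mul, Polynomial.coeff_X_pow, mul_ite, mul_one, mul_zero]
  rw [Finset.sum_ite_eq (Finset.range a) j b]
  simp [Finset.mem_range.mpr hj]

lemma degree_sum_CX (a : ℕ) (b : ℕ → ZMod 2) :
    (∑ i ∈ Finset.range a, Polynomial.C (b i) * Polynomial.X ^ i).degree
      < (a : WithBot ℕ) := by
  apply lt_of_le_of_lt (Polynomial.degree_sum_le _ _)
  apply Finset.sup_lt_iff (by exact_mod_cast WithBot.bot_lt_coe a) |>.mpr
  intro i hi
  apply lt_of_le_of_lt (Polynomial.degree_C_mul_X_pow_le _ _)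
  exact_mod_cast Finset.mem_range.mp hi

lemma uaCoeff_mk (a : ℕ) (b : ℕ → ZMod 2) (j : ℕ) (hj : j < a) :
    uaCoeff (Ideal.Quotient.mk (Ideal.span {(Polynomial.X : Polynomial (ZMod 2)) ^ a})
      (∑ i ∈ Finset.range a, Polynomial.C (b i) * Polynomial.X ^ i)) j = b j := by
  unfold uaCoeff
  rw [uaRep_mk,
    (Polynomial.modByMonic_eq_self_iff (Polynomial.monic_X_pow a)).mpr
      (by simpa using degree_sum_CX a b),
    coeff_sum_CX a b j hj]

lemma PhiV_code {n a : ℕ} (c : ℕ → Fin n → ZMod 2) :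
    PhiV (fun k => (Ideal.Quotient.mk _
        (∑ i ∈ Finset.range a, Polynomial.C (c i k) * Polynomial.X ^ i) : Ua a))
      = ∑ i ∈ Finset.range a, (2 ^ i : ℤ) • psi (c i) := by
  funext k
  simp only [PhiV, PhiU, Finset.sum_apply, Pi.smul_apply, psi, smul_eq_mul]
  refine Finset.sum_congr rfl fun j hj => ?_
  rw [uaCoeff_mk a (fun i => c i k) j (Finset.mem_range.mp hj), mul_comm]

lemma code_zero_mem {n a : ℕ} (C : ℕ → Submodule (ZMod 2) (Fin n → ZMod 2)) :
    (0 : Fin n → Ua a) ∈ CodeSet a C := by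
  refine ⟨0, fun i _ => (C i).zero_mem, ?_⟩
  funext k
  simp

lemma code_add_mem {n a : ℕ} (C : ℕ → Submodule (ZMod 2) (Fin n → ZMod 2))
    {x y : Fin n → Ua a} (hx : x ∈ CodeSet a C) (hy : y ∈ CodeSet a C) :
    x + y ∈ CodeSet a C := by
  obtain ⟨c, hc, rfl⟩ := hx
  obtain ⟨d, hd, rfl⟩ := hy
  refine ⟨fun i => c i + d i, fun i hi => (C i).add_mem (hc i hi) (hd i hi), ?_⟩
  funext k
  simp only [Pi.add_apply, ← map_add, ← Finset.sum_add_distrib, ← add_mul, ← map_add]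

lemma code_usmul_mem {n a : ℕ} (C : ℕ → Submodule (ZMod 2) (Fin n → ZMod 2))
    (hmono : ∀ i < a, C i ≤ C (i + 1))
    {x : Fin n → Ua a} (hx : x ∈ CodeSet a C) :
    uU a • x ∈ CodeSet a C := by
  obtain ⟨c, hc, rfl⟩ := hx
  refine ⟨fun i => if i = 0 then 0 else c (i - 1), ?_, ?_⟩
  · intro i hi
    cases i with
    | zero => simpa using (C 0).zero_mem
    | succ m => simpa using hmono m (by omega) (hc m (by omega))
  · funext k
    show uU a * Ideal.Quotient.mk _ _ = _
    rw [uU, ← map_mul]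
    rw [Ideal.Quotient.eq, Ideal.mem_span_singleton]
    cases a with
    | zero => simp
    | succ m =>
      have h1 : Polynomial.X *
          (∑ i ∈ Finset.range (m + 1), Polynomial.C (c i k) * Polynomial.X ^ i)
          = ∑ i ∈ Finset.range (m + 1), Polynomial.C (c i k) * Polynomial.X ^ (i + 1) := by
        rw [Finset.mul_sum]
        refine Finset.sum_congr rfl fun i _ => by ring
      have h2 : (∑ i ∈ Finset.range (m + 1),
            Polynomial.C ((if i = 0 then 0 else c (i - 1)) k) * Polynomial.X ^ i)
          = ∑ i ∈ Finset.range m, Polynomial.C (c i k) * Polynomial.X ^ (i + 1) := by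
        rw [Finset.sum_range_succ']
        simp
      rw [h1, h2, Finset.sum_range_succ]
      ring_nf
      exact ⟨Polynomial.C (c m k), by ring⟩

lemma code_smul_mem {n a : ℕ} (C : ℕ → Submodule (ZMod 2) (Fin n → ZMod 2))
    (hmono : ∀ i < a, C i ≤ C (i + 1)) (r : Ua a)
    {x : Fin n → Ua a} (hx : x ∈ CodeSet a C) :
    r • x ∈ CodeSet a C := by
  obtain ⟨p, rfl⟩ := Ideal.Quotient.mk_surjective
    (I := Ideal.span {(Polynomial.X : Polynomial (ZMod 2)) ^ a}) r
  induction p using Polynomial.induction_on' with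
  | add p q hp hq =>
    rw [map_add, add_smul]
    exact code_add_mem C hp hq
  | monomial m b =>
    have hb : b = 0 ∨ b = 1 := by revert b; decide
    rcases hb with rfl | rfl
    · rw [Polynomial.monomial_zero_right, map_zero]
      have h0 : (0 : Ua a) • x = 0 := by
        funext k; show (0 : Ua a) * x k = 0; ring
      rw [h0]
      exact code_zero_mem C
    · rw [← Polynomial.X_pow_eq_monomial, map_pow]
      show (uU a) ^ m • x ∈ CodeSet a C
      induction m with
      | zero => simpa using hx
      | succ m ih =>
        have : (uU a) ^ (m + 1) • x = uU a • ((uU a) ^ m • x) := by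
          funext k; show uU a ^ (m + 1) * x k = uU a * (uU a ^ m * x k); ring
        rw [this]
        exact code_usmul_mem C hmono ih

/-- The code `C = C₀ + u C₁ + ... + u^{a-1} C_{a-1}` associated to a
chain of nested binary linear codes is a `𝒰_a`-submodule of `(Fin n → 𝒰_a)`, and
`Φ(C) + 2^a ℤ^n = Γ_CF`. -/
theorem codeSet_submodule_and_gammaA'_eq_gammaCF {n a : ℕ}
    (C : ℕ → Submodule (ZMod 2) (Fin n → ZMod 2))
    (hmono : ∀ i < a, C i ≤ C (i + 1)) (htop : C a = ⊤) :
    (∃ M : Submodule (Ua a) (Fin n → Ua a),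
        (M : Set (Fin n → Ua a)) = CodeSet a C) ∧
    GammaA' (CodeSet a C) = GammaCF a C := by
  constructor
  · exact ⟨{ carrier := CodeSet a C
             add_mem' := fun hx hy => code_add_mem C hx hy
             zero_mem' := code_zero_mem C
             smul_mem' := fun r x hx => code_smul_mem C hmono r hx }, rfl⟩
  · ext x
    constructor
    · rintro ⟨y, ⟨c, hc, rfl⟩, l, rfl⟩
      exact ⟨c, l, hc, by rw [PhiV_code]⟩
    · rintro ⟨c, l, hc, rfl⟩
      exact ⟨_, ⟨c, hc, rfl⟩, l, by rw [PhiV_code]⟩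
end
end

section
/- For all vectors c_1, c_2 ∈ (Fin n → 𝒰_a), there exists l ∈ ℤ^n such that Φ(c_1) + Φ(c_2) − Φ(c_1 + c_2) = Φ((c_1 ∗ c_2)·u) + 2^a · l, where c_1 ∗ c_2 is the coefficientwise Schur product of polynomial vectors and (c_1 ∗ c_2)·u denotes multiplication by u in (Fin n → 𝒰_a). -/
noncomputable section

/-- The Schur (Hadamard) product on `𝒰_a`:
`(Σ_j x_j u^j) ∗ (Σ_j y_j u^j) = Σ_j (x_j y_j) u^j`. -/
noncomputable def schurU {a : ℕ} (x y : Ua a) : Ua a :=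
  Ideal.Quotient.mk _
    (∑ j ∈ Finset.range a, Polynomial.C (uaCoeff x j * uaCoeff y j) * Polynomial.X ^ j)

open Polynomial

lemma uaRep_eq {a : ℕ} (p : Polynomial (ZMod 2)) (x : Ua a)
    (h : Ideal.Quotient.mk (Ideal.span {(X : Polynomial (ZMod 2)) ^ a}) p = x) :
    uaRep x = p %ₘ X ^ a := by
  unfold uaRep
  set q := Function.surjInv
    (Ideal.Quotient.mk_surjective
      (I := Ideal.span {(Polynomial.X : Polynomial (ZMod 2)) ^ a})) x with hqdef
  have hq : Ideal.Quotient.mk (Ideal.span {(X : Polynomial (ZMod 2)) ^ a}) q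
      = Ideal.Quotient.mk (Ideal.span {(X : Polynomial (ZMod 2)) ^ a}) p := by
    have hs := Function.surjInv_eq
      (Ideal.Quotient.mk_surjective
        (I := Ideal.span {(Polynomial.X : Polynomial (ZMod 2)) ^ a})) x
    rw [hqdef, hs, h]
  have hd : (X : Polynomial (ZMod 2)) ^ a ∣ q - p := by
    rw [← Ideal.mem_span_singleton]
    exact Ideal.Quotient.eq.mp hq
  have h0 : (q - p) %ₘ X ^ a = 0 :=
    (Polynomial.modByMonic_eq_zero_iff_dvd (monic_X_pow a)).mpr hd
  rw [Polynomial.sub_modByMonic] at h0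
  linear_combination (norm := ring_nf) h0

lemma uaCoeff_mk_s15 {a : ℕ} (p : Polynomial (ZMod 2)) (j : ℕ) (hj : j < a) :
    uaCoeff (Ideal.Quotient.mk (Ideal.span {(X : Polynomial (ZMod 2)) ^ a}) p) j
      = p.coeff j := by
  unfold uaCoeff
  rw [uaRep_eq p _ rfl, Polynomial.modByMonic_eq_sub_mul_div _ (X ^ a),
    Polynomial.coeff_sub, (commute_X_pow _ a).eq, Polynomial.coeff_mul_X_pow',
    if_neg (by omega), sub_zero]

private lemma bit_add_val (b c : ZMod 2) :
    (((b + c).val : ℤ)) = (b.val : ℤ) + (c.val : ℤ) - 2 * ((b * c).val : ℤ) := by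
  revert b c; decide

lemma key_dvd {a : ℕ} (x y : Ua a) :
    (2 : ℤ) ^ a ∣ PhiU x + PhiU y - PhiU (x + y) - PhiU (schurU x y * uU a) := by
  obtain ⟨p, hp⟩ := Ideal.Quotient.mk_surjective
    (I := Ideal.span {(Polynomial.X : Polynomial (ZMod 2)) ^ a}) x
  obtain ⟨q, hq⟩ := Ideal.Quotient.mk_surjective
    (I := Ideal.span {(Polynomial.X : Polynomial (ZMod 2)) ^ a}) y
  -- coefficients
  set d : ℕ → ZMod 2 := fun j => uaCoeff x j * uaCoeff y j with hd
  have hadd : ∀ j < a, uaCoeff (x + y) j = uaCoeff x j + uaCoeff y j := by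
    intro j hj
    rw [← hp, ← hq, ← map_add, uaCoeff_mk_s15 _ _ hj, uaCoeff_mk_s15 _ _ hj, uaCoeff_mk_s15 _ _ hj,
      Polynomial.coeff_add]
  -- coefficients of schurU x y * uU a
  have hS : schurU x y * uU a
      = Ideal.Quotient.mk (Ideal.span {(X : Polynomial (ZMod 2)) ^ a})
        ((∑ j ∈ Finset.range a, Polynomial.C (d j) * Polynomial.X ^ j) * X) := by
    rw [map_mul]; rfl
  have hScoeff : ∀ i < a,
      (∑ j ∈ Finset.range a, Polynomial.C (d j) * Polynomial.X ^ j).coeff i = d i := by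
    intro i hi
    rw [Polynomial.finset_sum_coeff]
    simp only [Polynomial.coeff_C_mul, Polynomial.coeff_X_pow, mul_ite, mul_one, mul_zero]
    rw [Finset.sum_ite_eq (Finset.range a) i d, if_pos (Finset.mem_range.mpr hi)]
  have hmu0 : uaCoeff (schurU x y * uU a) 0 = 0 ∨ a = 0 := by
    rcases Nat.eq_zero_or_pos a with h | h
    · exact Or.inr h
    · left
      rw [hS, uaCoeff_mk_s15 _ _ h]
      simp [Polynomial.coeff_mul_X_pow' _ 1 0]
  have hmu : ∀ j, j + 1 < a → uaCoeff (schurU x y * uU a) (j + 1) = d j := by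
    intro j hj
    rw [hS, uaCoeff_mk_s15 _ _ hj, Polynomial.coeff_mul_X, hScoeff _ (by omega)]
  -- now compute
  rcases Nat.eq_zero_or_pos a with rfl | ha
  · simp [PhiU]
  obtain ⟨a', rfl⟩ : ∃ a', a = a' + 1 := ⟨a - 1, by omega⟩
  have h1 : PhiU x + PhiU y - PhiU (x + y)
      = ∑ j ∈ Finset.range (a' + 1), ((d j).val : ℤ) * 2 ^ (j + 1) := by
    unfold PhiU
    rw [← Finset.sum_add_distrib, ← Finset.sum_sub_distrib]
    refine Finset.sum_congr rfl fun j hj => ?_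
    rw [hadd j (Finset.mem_range.mp hj), bit_add_val]
    simp only [hd]
    ring
  have h2 : PhiU (schurU x y * uU (a' + 1))
      = ∑ j ∈ Finset.range a', ((d j).val : ℤ) * 2 ^ (j + 1) := by
    unfold PhiU
    rw [Finset.sum_range_succ']
    have h0 : uaCoeff (schurU x y * uU (a' + 1)) 0 = 0 := by
      rcases hmu0 with h | h
      · exact h
      · omega
    rw [h0]
    simp only [ZMod.val_zero, Int.ofNat_zero, zero_mul, add_zero, Nat.cast_zero]
    refine Finset.sum_congr rfl fun j hj => ?_
    rw [hmu j (by have := Finset.mem_range.mp hj; omega)]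
  rw [h1, h2, Finset.sum_range_succ]
  refine ⟨((d a').val : ℤ), by ring⟩

/-- For all vectors `c₁, c₂ ∈ (Fin n → 𝒰_a)` there is `l ∈ ℤ^n` with
`Φ(c₁) + Φ(c₂) − Φ(c₁ + c₂) = Φ((c₁ ∗ c₂)·u) + 2^a l`. -/
theorem phi_add_sub_eq {n a : ℕ} (c₁ c₂ : Fin n → Ua a) :
    ∃ l : Fin n → ℤ,
      PhiV c₁ + PhiV c₂ - PhiV (c₁ + c₂)
        = PhiV (fun k => schurU (c₁ k) (c₂ k) * uU a) + (2 ^ a : ℤ) • l := by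
  refine ⟨fun k => (key_dvd (c₁ k) (c₂ k)).choose, ?_⟩
  funext k
  have h := (key_dvd (c₁ k) (c₂ k)).choose_spec
  simp only [Pi.add_apply, Pi.sub_apply, Pi.smul_apply, smul_eq_mul, PhiV]
  linarith [h]
end
end

section
/- Let C be a linear code over 𝒰_a of length n (a 𝒰_a-submodule of (Fin n → 𝒰_a)). Then the set Γ_A' := Φ(C) + 2^a ℤ^n = { Φ(c) + 2^a l | c ∈ C, l ∈ ℤ^n } is an additive subgroup of ℤ^n (i.e., a lattice) if and only if C is closed under shifted Schur product, i.e., for all c_1, c_2 ∈ C, (c_1 ∗ c_2)·u ∈ C. -/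
noncomputable section

set_option synthInstance.maxHeartbeats 400000

open Polynomial

variable {a : ℕ}

lemma mk_modByMonic (p : Polynomial (ZMod 2)) :
    Ideal.Quotient.mk (Ideal.span {(X : Polynomial (ZMod 2)) ^ a}) (p %ₘ X ^ a)
      = Ideal.Quotient.mk _ p := by
  conv_rhs => rw [← modByMonic_add_div p ((X : Polynomial (ZMod 2)) ^ a)]
  rw [map_add]
  have h : Ideal.Quotient.mk (Ideal.span {(X : Polynomial (ZMod 2)) ^ a}) (X ^ a * (p /ₘ X ^ a)) = 0 := by
    rw [Ideal.Quotient.eq_zero_iff_mem]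
    exact Ideal.mul_mem_right _ _ (Ideal.subset_span rfl)
  rw [h, add_zero]

lemma mk_uaRep (x : Ua a) : Ideal.Quotient.mk _ (uaRep x) = x := by
  unfold uaRep
  rw [mk_modByMonic]
  exact Function.surjInv_eq _ x

lemma uaRep_degree_lt (x : Ua a) : (uaRep x).degree < (a : WithBot ℕ) := by
  have := degree_modByMonic_lt
    (Function.surjInv (Ideal.Quotient.mk_surjective
      (I := Ideal.span {(Polynomial.X : Polynomial (ZMod 2)) ^ a})) x)
    (monic_X_pow a (R := ZMod 2))
  rwa [degree_X_pow] at this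

lemma uaRep_unique {p : Polynomial (ZMod 2)} {x : Ua a}
    (h : Ideal.Quotient.mk (Ideal.span {(X : Polynomial (ZMod 2)) ^ a}) p = x)
    (hd : p.degree < (a : WithBot ℕ)) : uaRep x = p := by
  have h2 : Ideal.Quotient.mk (Ideal.span {(X : Polynomial (ZMod 2)) ^ a}) (uaRep x - p) = 0 := by
    rw [map_sub, mk_uaRep, h, sub_self]
  rw [Ideal.Quotient.eq_zero_iff_mem, Ideal.mem_span_singleton] at h2
  have hd2 : (uaRep x - p).degree < (X ^ a : Polynomial (ZMod 2)).degree := by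
    rw [degree_X_pow]
    exact lt_of_le_of_lt (degree_sub_le _ _) (max_lt (uaRep_degree_lt x) hd)
  have h3 := Polynomial.eq_zero_of_dvd_of_degree_lt h2 hd2
  exact sub_eq_zero.mp h3

lemma uaRep_zero : uaRep (0 : Ua a) = 0 := by
  apply uaRep_unique (map_zero _)
  rw [degree_zero]; exact WithBot.bot_lt_coe a

lemma uaRep_add (x y : Ua a) : uaRep (x + y) = uaRep x + uaRep y := by
  apply uaRep_unique
  · rw [map_add, mk_uaRep, mk_uaRep]
  · exact lt_of_le_of_lt (degree_add_le _ _)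
      (max_lt (uaRep_degree_lt x) (uaRep_degree_lt y))

lemma uaCoeff_add (x y : Ua a) (j : ℕ) :
    uaCoeff (x + y) j = uaCoeff x j + uaCoeff y j := by
  unfold uaCoeff; rw [uaRep_add, coeff_add]

lemma uaCoeff_zero (j : ℕ) : uaCoeff (0 : Ua a) j = 0 := by
  unfold uaCoeff; rw [uaRep_zero, coeff_zero]

lemma uaCoeff_high {x : Ua a} {j : ℕ} (hj : a ≤ j) : uaCoeff x j = 0 :=
  coeff_eq_zero_of_degree_lt (lt_of_lt_of_le (uaRep_degree_lt x) (by exact_mod_cast hj))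

lemma PhiU_zero : PhiU (0 : Ua a) = 0 := by
  unfold PhiU; simp [uaCoeff_zero]

lemma val_le_one (b : ZMod 2) : b.val ≤ 1 := by
  have := ZMod.val_lt b; omega

lemma geom2 : ∀ a : ℕ, (∑ j ∈ Finset.range a, (2:ℤ)^j) = 2^a - 1 := by
  intro a; induction a with
  | zero => simp
  | succ n ih => rw [Finset.sum_range_succ, ih]; ring

lemma PhiU_nonneg (x : Ua a) : 0 ≤ PhiU x := by
  unfold PhiU; positivity

lemma PhiU_le (x : Ua a) : PhiU x ≤ 2 ^ a - 1 := by
  unfold PhiU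
  calc ∑ j ∈ Finset.range a, ((uaCoeff x j).val : ℤ) * 2 ^ j
      ≤ ∑ j ∈ Finset.range a, (2:ℤ) ^ j := by
        apply Finset.sum_le_sum
        intro j _
        have := val_le_one (uaCoeff x j)
        have h2 : (0:ℤ) < 2 ^ j := by positivity
        nlinarith [((uaCoeff x j).val : ℤ)]
    _ = 2 ^ a - 1 := geom2 a

lemma val_add_identity (b c : ZMod 2) :
    (((b + c).val : ℤ)) + 2 * ((b * c).val : ℤ) = (b.val : ℤ) + (c.val : ℤ) := by
  revert b c; decide

lemma binary_inj : ∀ (a : ℕ) (f g : ℕ → ZMod 2),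
    (∑ j ∈ Finset.range a, ((f j).val : ℤ) * 2 ^ j)
      = ∑ j ∈ Finset.range a, ((g j).val : ℤ) * 2 ^ j →
    ∀ j < a, f j = g j := by
  intro a
  induction a with
  | zero => intro f g h j hj; omega
  | succ m ih =>
    intro f g h j hj
    rw [Finset.sum_range_succ, Finset.sum_range_succ] at h
    have hfb : 0 ≤ ∑ j ∈ Finset.range m, ((f j).val : ℤ) * 2 ^ j := by positivity
    have hgb : 0 ≤ ∑ j ∈ Finset.range m, ((g j).val : ℤ) * 2 ^ j := by positivity
    have hfu : ∑ j ∈ Finset.range m, ((f j).val : ℤ) * 2 ^ j ≤ 2 ^ m - 1 := by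
      calc _ ≤ ∑ j ∈ Finset.range m, (2:ℤ) ^ j := by
              apply Finset.sum_le_sum; intro j _
              have := val_le_one (f j)
              have h2 : (0:ℤ) < 2 ^ j := by positivity
              nlinarith [((f j).val : ℤ)]
        _ = 2 ^ m - 1 := geom2 m
    have hgu : ∑ j ∈ Finset.range m, ((g j).val : ℤ) * 2 ^ j ≤ 2 ^ m - 1 := by
      calc _ ≤ ∑ j ∈ Finset.range m, (2:ℤ) ^ j := by
              apply Finset.sum_le_sum; intro j _
              have := val_le_one (g j)
              have h2 : (0:ℤ) < 2 ^ j := by positivity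
              nlinarith [((g j).val : ℤ)]
        _ = 2 ^ m - 1 := geom2 m
    have hfv := val_le_one (f m)
    have hgv := val_le_one (g m)
    have h1 : (1:ℤ) ≤ 2 ^ m := by exact_mod_cast Nat.one_le_two_pow
    have hf01 : (f m).val = 0 ∨ (f m).val = 1 := by omega
    have hg01 : (g m).val = 0 ∨ (g m).val = 1 := by omega
    have heq : (f m).val = (g m).val ∧
        (∑ j ∈ Finset.range m, ((f j).val : ℤ) * 2 ^ j)
          = ∑ j ∈ Finset.range m, ((g j).val : ℤ) * 2 ^ j := by
      rcases hf01 with h0 | h0 <;> rcases hg01 with h0' | h0' <;>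
        rw [h0, h0'] at h <;> push_cast at h <;>
        exact ⟨by rw [h0, h0']; all_goals exact ((by linarith : False)).elim, by linarith⟩
    rcases Nat.lt_succ_iff_lt_or_eq.mp hj with hj' | hj'
    · exact ih f g heq.2 j hj'
    · subst hj'
      have := heq.1
      exact ZMod.val_injective 2 (by exact_mod_cast this)

lemma PhiU_injective {x y : Ua a} (h : PhiU x = PhiU y) : x = y := by
  have hc : ∀ j < a, uaCoeff x j = uaCoeff y j :=
    binary_inj a (uaCoeff x) (uaCoeff y) h
  have hrep : uaRep x = uaRep y := by
    ext j
    by_cases hj : j < a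
    · exact hc j hj
    · have h1 : uaCoeff x j = 0 := uaCoeff_high (le_of_not_gt hj)
      have h2 : uaCoeff y j = 0 := uaCoeff_high (le_of_not_gt hj)
      unfold uaCoeff at h1 h2
      rw [h1, h2]
  calc x = Ideal.Quotient.mk _ (uaRep x) := (mk_uaRep x).symm
    _ = Ideal.Quotient.mk _ (uaRep y) := by rw [hrep]
    _ = y := mk_uaRep y

lemma uaRep_schur_shift (x y : Ua a) :
    uaRep (schurU x y * uU a)
      = ∑ j ∈ Finset.range (a - 1), C (uaCoeff x j * uaCoeff y j) * X ^ (j + 1) := by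
  apply uaRep_unique
  · have h1 : schurU x y * uU a = Ideal.Quotient.mk _
        (∑ j ∈ Finset.range a, C (uaCoeff x j * uaCoeff y j) * X ^ (j + 1)) := by
      unfold schurU uU
      rw [← map_mul]
      congr 1
      rw [Finset.sum_mul]
      apply Finset.sum_congr rfl
      intro j _
      rw [mul_assoc, ← pow_succ]
    rcases Nat.eq_zero_or_pos a with ha | ha
    · subst ha; simp at h1 ⊢; exact h1.symm
    · obtain ⟨m, rfl⟩ : ∃ m, a = m + 1 := ⟨a - 1, by omega⟩
      rw [h1, Finset.sum_range_succ, map_add]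
      have h2 : Ideal.Quotient.mk (Ideal.span {(X : Polynomial (ZMod 2)) ^ (m+1)})
          (C (uaCoeff x m * uaCoeff y m) * X ^ (m + 1)) = 0 := by
        rw [Ideal.Quotient.eq_zero_iff_mem]
        exact Ideal.mul_mem_left _ _ (Ideal.subset_span rfl)
      rw [h2, add_zero]
      norm_num
  · apply lt_of_le_of_lt (degree_sum_le _ _)
    rw [Finset.sup_lt_iff (by exact WithBot.bot_lt_coe a)]
    intro j hj
    apply lt_of_le_of_lt (degree_C_mul_X_pow_le _ _)
    exact_mod_cast (by simp at hj; omega : j + 1 < a)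

lemma uaCoeff_schur_shift_zero (x y : Ua a) : uaCoeff (schurU x y * uU a) 0 = 0 := by
  unfold uaCoeff
  rw [uaRep_schur_shift, finset_sum_coeff]
  apply Finset.sum_eq_zero
  intro j _
  rw [coeff_C_mul, coeff_X_pow]
  simp

lemma uaCoeff_schur_shift_succ (x y : Ua a) (j : ℕ) :
    uaCoeff (schurU x y * uU a) (j + 1)
      = if j < a - 1 then uaCoeff x j * uaCoeff y j else 0 := by
  unfold uaCoeff
  rw [uaRep_schur_shift, finset_sum_coeff]
  have : ∀ i ∈ Finset.range (a - 1),
      (C (uaCoeff x i * uaCoeff y i) * X ^ (i + 1)).coeff (j + 1)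
        = if i = j then uaCoeff x i * uaCoeff y i else 0 := by
    intro i _
    rw [coeff_C_mul, coeff_X_pow]
    by_cases hij : i = j
    · subst hij; simp
    · simp [hij, Ne.symm hij]
  rw [Finset.sum_congr rfl this, Finset.sum_ite_eq' (Finset.range (a-1)) j
    (fun i => uaCoeff x i * uaCoeff y i)]
  simp only [Finset.mem_range]
  rfl

lemma phi_add_eq (x y : Ua a) : ∃ e : ℤ,
    PhiU x + PhiU y = PhiU (x + y) + PhiU (schurU x y * uU a) + 2 ^ a * e := by
  rcases Nat.eq_zero_or_pos a with ha | ha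
  · subst ha
    refine ⟨PhiU x + PhiU y - PhiU (x + y) - PhiU (schurU x y * uU 0), by ring⟩
  obtain ⟨m, rfl⟩ : ∃ m, a = m + 1 := ⟨a - 1, by omega⟩
  refine ⟨((uaCoeff x m * uaCoeff y m).val : ℤ), ?_⟩
  have hsplit : PhiU x + PhiU y
      = PhiU (x + y) + ∑ j ∈ Finset.range (m + 1),
          2 * ((uaCoeff x j * uaCoeff y j).val : ℤ) * 2 ^ j := by
    unfold PhiU
    rw [← Finset.sum_add_distrib, ← Finset.sum_add_distrib]
    apply Finset.sum_congr rfl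
    intro j _
    rw [uaCoeff_add]
    linear_combination (-(2:ℤ) ^ j) * (val_add_identity (uaCoeff x j) (uaCoeff y j))
  have hd : PhiU (schurU x y * uU (m + 1))
      = ∑ j ∈ Finset.range m, ((uaCoeff x j * uaCoeff y j).val : ℤ) * 2 ^ (j + 1) := by
    unfold PhiU
    rw [Finset.sum_range_succ']
    rw [uaCoeff_schur_shift_zero]
    simp only [ZMod.val_zero, Nat.cast_zero, zero_mul, add_zero]
    apply Finset.sum_congr rfl
    intro j hj
    rw [uaCoeff_schur_shift_succ]
    rw [if_pos (by simp at hj; omega : j < (m + 1) - 1)]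
  rw [hsplit, hd, Finset.sum_range_succ]
  have : ∑ j ∈ Finset.range m, 2 * ((uaCoeff x j * uaCoeff y j).val : ℤ) * 2 ^ j
      = ∑ j ∈ Finset.range m, ((uaCoeff x j * uaCoeff y j).val : ℤ) * 2 ^ (j + 1) := by
    apply Finset.sum_congr rfl
    intro j _
    ring
  rw [this]
  ring

lemma phiV_add_eq {n : ℕ} (x y : Fin n → Ua a) : ∃ e : Fin n → ℤ,
    PhiV x + PhiV y
      = PhiV (x + y) + PhiV (fun k => schurU (x k) (y k) * uU a) + (2 ^ a : ℤ) • e := by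
  choose e he using fun k => phi_add_eq (x k) (y k)
  refine ⟨e, funext fun k => ?_⟩
  simp only [PhiV, Pi.add_apply, Pi.smul_apply, smul_eq_mul]
  rw [he k]

lemma schur_closure {n : ℕ} (C : Submodule (Ua a) (Fin n → Ua a))
    (hC : ∀ c₁ ∈ C, ∀ c₂ ∈ C, (fun k => schurU (c₁ k) (c₂ k) * uU a) ∈ C) :
    ∀ m : ℕ, ∀ x ∈ C, ∀ y ∈ C, (∀ k j, j + m < a → uaCoeff (y k) j = 0) →
      ∃ z ∈ C, ∃ l : Fin n → ℤ, PhiV x + PhiV y = PhiV z + (2 ^ a : ℤ) • l := by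
  intro m
  induction m with
  | zero =>
    intro x hx y hy hvan
    refine ⟨x, hx, 0, ?_⟩
    have hy0 : PhiV y = 0 := by
      funext k
      unfold PhiV PhiU
      apply Finset.sum_eq_zero
      intro j hj
      rw [hvan k j (by simpa using hj)]
      simp
    rw [hy0]; simp
  | succ m ih =>
    intro x hx y hy hvan
    have hdC : (fun k => schurU (x k) (y k) * uU a) ∈ C := hC x hx y hy
    have hdvan : ∀ k j, j + m < a →
        uaCoeff ((fun k => schurU (x k) (y k) * uU a) k) j = 0 := by
      intro k j hj
      match j with
      | 0 => exact uaCoeff_schur_shift_zero _ _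
      | j + 1 =>
        show uaCoeff (schurU (x k) (y k) * uU a) (j + 1) = 0
        rw [uaCoeff_schur_shift_succ, hvan k j (by omega)]
        simp
    obtain ⟨z, hz, l, hl⟩ := ih (x + y) (C.add_mem hx hy) _ hdC hdvan
    obtain ⟨e, he⟩ := phiV_add_eq x y
    refine ⟨z, hz, l + e, ?_⟩
    rw [he, hl, smul_add, add_assoc]

section Gamma

variable {n : ℕ} (C : Submodule (Ua a) (Fin n → Ua a))
  (hC : ∀ c₁ ∈ C, ∀ c₂ ∈ C, (fun k => schurU (c₁ k) (c₂ k) * uU a) ∈ C)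

lemma gamma_zero : (0 : Fin n → ℤ) ∈ GammaA' (C : Set (Fin n → Ua a)) := by
  refine ⟨0, C.zero_mem, 0, ?_⟩
  funext k
  simp [PhiV, PhiU_zero]

include hC in
lemma gamma_add : ∀ u ∈ GammaA' (C : Set (Fin n → Ua a)),
    ∀ v ∈ GammaA' (C : Set (Fin n → Ua a)),
    u + v ∈ GammaA' (C : Set (Fin n → Ua a)) := by
  rintro u ⟨c1, hc1, l1, rfl⟩ v ⟨c2, hc2, l2, rfl⟩
  obtain ⟨z, hz, l, hl⟩ := schur_closure C hC a c1 hc1 c2 hc2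
    (fun k j hj => absurd hj (by omega))
  refine ⟨z, hz, l + (l1 + l2), ?_⟩
  have h1 : (PhiV c1 + (2 ^ a : ℤ) • l1) + (PhiV c2 + (2 ^ a : ℤ) • l2)
      = (PhiV c1 + PhiV c2) + (2 ^ a : ℤ) • (l1 + l2) := by
    rw [smul_add]; abel
  rw [h1, hl, smul_add, smul_add, smul_add]
  abel

include hC in
lemma gamma_nsmul : ∀ (m : ℕ), ∀ u ∈ GammaA' (C : Set (Fin n → Ua a)),
    m • u ∈ GammaA' (C : Set (Fin n → Ua a)) := by
  intro m
  induction m with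
  | zero => intro u _; rw [zero_smul]; exact gamma_zero C
  | succ m ih =>
    intro u hu
    rw [succ_nsmul]
    exact gamma_add C hC _ (ih u hu) u hu

include hC in
lemma gamma_neg : ∀ u ∈ GammaA' (C : Set (Fin n → Ua a)),
    -u ∈ GammaA' (C : Set (Fin n → Ua a)) := by
  intro u hu
  obtain ⟨c, hc, l, hl⟩ := gamma_nsmul C hC (2 ^ a - 1) u hu
  refine ⟨c, hc, l - u, ?_⟩
  have hcast : ((2 ^ a - 1 : ℕ) : ℤ) = 2 ^ a - 1 := by
    have : (1:ℕ) ≤ 2 ^ a := Nat.one_le_two_pow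
    push_cast [this]
    ring
  funext k
  have h1 := congrFun hl k
  simp only [Pi.smul_apply, smul_eq_mul, Pi.add_apply, Pi.neg_apply, Pi.sub_apply,
    nsmul_eq_mul] at h1 ⊢
  rw [hcast] at h1
  linarith

end Gamma

/-- For a linear code `C` over `𝒰_a`, the Construction A' set
`Γ_{A'} = Φ(C) + 2^a ℤ^n` is an additive subgroup of `ℤ^n` (a lattice) if and only if
`C` is closed under shifted Schur product: `(c₁ ∗ c₂)·u ∈ C` for all `c₁, c₂ ∈ C`. -/
theorem gammaA'_lattice_iff_shifted_schur {n a : ℕ}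
    (C : Submodule (Ua a) (Fin n → Ua a)) :
    (∃ G : AddSubgroup (Fin n → ℤ),
        (G : Set (Fin n → ℤ)) = GammaA' (C : Set (Fin n → Ua a)))
      ↔ ∀ c₁ ∈ C, ∀ c₂ ∈ C, (fun k => schurU (c₁ k) (c₂ k) * uU a) ∈ C := by
  constructor
  · rintro ⟨G, hG⟩ c₁ hc₁ c₂ hc₂
    have hmem : ∀ c ∈ C, PhiV c ∈ G := by
      intro c hc
      rw [← SetLike.mem_coe, hG]
      exact ⟨c, hc, 0, by simp⟩
    have hg : PhiV c₁ + PhiV c₂ - PhiV (c₁ + c₂) ∈ G :=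
      sub_mem (add_mem (hmem c₁ hc₁) (hmem c₂ hc₂)) (hmem _ (C.add_mem hc₁ hc₂))
    rw [← SetLike.mem_coe, hG] at hg
    obtain ⟨c, hcC, l, hl⟩ := hg
    obtain ⟨e, he⟩ := phiV_add_eq c₁ c₂
    have key : ∀ k, PhiU (schurU (c₁ k) (c₂ k) * uU a) = PhiU (c k) := by
      intro k
      have h1 := congrFun he k
      have h2 := congrFun hl k
      simp only [PhiV, Pi.add_apply, Pi.sub_apply, Pi.smul_apply, smul_eq_mul] at h1 h2
      have hb1 := PhiU_nonneg (schurU (c₁ k) (c₂ k) * uU a)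
      have hb2 := PhiU_le (schurU (c₁ k) (c₂ k) * uU a)
      have hb3 := PhiU_nonneg (c k)
      have hb4 := PhiU_le (c k)
      have hp : (0:ℤ) < 2 ^ a := by positivity
      have heq : PhiU (schurU (c₁ k) (c₂ k) * uU a) - PhiU (c k)
          = 2 ^ a * (l k - e k) := by linear_combination h2 - h1
      have hz : l k - e k = 0 := by
        rcases lt_trichotomy (l k - e k) 0 with h | h | h
        · have hle : l k - e k ≤ -1 := by omega
          have := mul_le_mul_of_nonneg_left hle (le_of_lt hp)
          rw [mul_neg_one] at this
          linarith
        · exact h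
        · have hle : (1:ℤ) ≤ l k - e k := by omega
          have := mul_le_mul_of_nonneg_left hle (le_of_lt hp)
          rw [mul_one] at this
          linarith
      rw [hz, mul_zero] at heq
      linarith
    have hdc : (fun k => schurU (c₁ k) (c₂ k) * uU a) = c :=
      funext fun k => PhiU_injective (key k)
    rw [hdc]
    exact hcC
  · intro hC
    refine ⟨{
      carrier := GammaA' (C : Set (Fin n → Ua a)),
      zero_mem' := gamma_zero C,
      add_mem' := fun {u v} hu hv => gamma_add C hC u hu v hv,
      neg_mem' := fun {u} hu => gamma_neg C hC u hu }, rfl⟩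
end
end
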